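/- arXiv:1009.0492 — 5 statements merged into one kernel-verified Lean document; each statement's English description precedes it below -/
import Mathlib

section
/- The normal-form monotone span program computes the access structure Γ: for every subset A ⊆ P, the vector ε₁ = (1,0,…,0) ∈ F_q^e lies in the row span of M_A (equivalently, ε₁ ∈ Im(M_A^t)) if and only if A contains some minimal authorized set A_i, i.e. if and only if A ∈ Γ. -/
/-!
Normal-form monotone span programs (Smith's construction for quantum secret sharing).

Players are `Fin n`.  The minimal authorized sets are `A 0, …, A (k-1)`,
distinct nonempty subsets forming an antichain whose union is all of `Fin n`.
`enum i` fixes an enumeration of the elements of `A i`; the last element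
`enum i ⟨card - 1⟩` plays the role of the distinguished participant of block `i`.
-/

/-- The combinatorial data of a normal-form monotone span program. -/
structure MSP (n k : ℕ) where
  /-- the minimal authorized sets -/
  A : Fin k → Finset (Fin n)
  nonempty : ∀ i, (A i).Nonempty
  /-- antichain (this also forces the `A i` to be pairwise distinct) -/
  antichain : ∀ i j : Fin k, i ≠ j → ¬ A i ⊆ A j
  /-- every player occurs in some minimal authorized set -/
  cover : ∀ p : Fin n, ∃ i, p ∈ A i
  /-- a fixed enumeration `p_{i,1}, …, p_{i,|A_i|}` of each `A i` -/
  enum : ∀ i, Fin ((A i).card) ≃ {p : Fin n // p ∈ A i}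

namespace MSP

variable {n k : ℕ}

/-- Row indices of the span matrix: block `i` has `|A i|` rows. -/
abbrev Rows (S : MSP n k) := (i : Fin k) × Fin ((S.A i).card)

/-- Column indices: the first column (`none`) together with the blocks
`C i` of `r_i = |A i| - 1` columns (`some ⟨i, j⟩`). -/
abbrev Cols (S : MSP n k) := Option ((i : Fin k) × Fin ((S.A i).card - 1))

/-- The player labelling the rows (the map `ψ`). -/
def label (S : MSP n k) (r : S.Rows) : Fin n := (S.enum r.1 r.2 : Fin n)

/-- The normal-form span matrix `M`.  In block `i`, row `j` with
`j < |A i| - 1` is the `j`-th identity row (a single `1` in column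
`some ⟨i, j⟩`), and the last row (`j = |A i| - 1`) is
`(1, 0, …, 0, -1, …, -1)`: a `1` in column `none` and `-1` in every
column of block `i`. -/
def M (F : Type*) [Field F] (S : MSP n k) : Matrix S.Rows S.Cols F :=
  Matrix.of fun r c =>
    match c with
    | none => if (r.2 : ℕ) = (S.A r.1).card - 1 then 1 else 0
    | some ⟨i, j⟩ =>
        if i = r.1 then
          (if (r.2 : ℕ) = (S.A r.1).card - 1 then -1
           else if (j : ℕ) = (r.2 : ℕ) then 1 else 0)
        else 0

/-- The submatrix `M_B` of `M` consisting of all rows labelled by players in `B`. -/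
def MSub (F : Type*) [Field F] (S : MSP n k) (B : Finset (Fin n)) :
    Matrix {r : S.Rows // S.label r ∈ B} S.Cols F :=
  Matrix.of fun r c => M F S r.1 c

/-- The vector `ε₁ = (1, 0, …, 0)`. -/
def eps1 (F : Type*) [Field F] (S : MSP n k) : S.Cols → F :=
  fun c => match c with
  | none => 1
  | some _ => 0

/-- The access structure computed by the program:
`B` is authorized iff it contains some minimal authorized set. -/
def auth (S : MSP n k) (B : Finset (Fin n)) : Prop := ∃ i, S.A i ⊆ B

/-- Self-duality of the access structure. -/
def selfDual (S : MSP n k) : Prop :=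
  ∀ X : Finset (Fin n), S.auth X ↔ ¬ S.auth (Finset.univ \ X)

end MSP

open MSP

lemma sum_ite_coe_lt {F : Type*} [AddCommMonoid F] {m a : ℕ} (h : a < m) (x : F) :
    ∑ j : Fin m, (if (j:ℕ) = a then x else 0) = x := by
  rw [Finset.sum_eq_single (⟨a, h⟩ : Fin m)]
  · simp
  · intro b _ hb
    exact if_neg fun hba => hb (Fin.ext hba)
  · simp

lemma sum_ite_coe_ge {F : Type*} [AddCommMonoid F] {m a : ℕ} (h : m ≤ a) (x : F) :
    ∑ j : Fin m, (if (j:ℕ) = a then x else 0) = 0 :=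
  Finset.sum_eq_zero fun b _ => if_neg (fun hba => absurd b.isLt (by omega))


/-- The normal-form monotone span program computes the access
structure `Γ`: for every subset `B ⊆ P`, the vector `ε₁ = (1,0,…,0)` lies in
the row span of `M_B` (equivalently `ε₁ ∈ Im(M_B^t)`) if and only if `B`
contains some minimal authorized set `A i`, i.e. iff `B ∈ Γ`. -/
theorem msp_computes_access_structure {F : Type*} [Field F] [Fintype F] {n k : ℕ}
    (S : MSP n k) (B : Finset (Fin n)) :
    eps1 F S ∈ Submodule.span F
        (Set.range fun r : {r : S.Rows // S.label r ∈ B} => M F S r.1) ↔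
      ∃ i, S.A i ⊆ B := by

  constructor
  · intro hmem
    by_contra hno
    push_neg at hno
    have hchoice : ∀ i : Fin k, ∃ t : Fin ((S.A i).card), (S.enum i t : Fin n) ∉ B := by
      intro i
      obtain ⟨p, hpA, hpB⟩ := Finset.not_subset.mp (hno i)
      exact ⟨(S.enum i).symm ⟨p, hpA⟩, by simpa using hpB⟩
    choose t ht using hchoice
    set κ : S.Cols → F := fun c =>
      match c with
      | none => 1
      | some ⟨i, j⟩ => if (j : ℕ) = (t i : ℕ) then 1 else 0 with hκ
    have hκn : κ none = 1 := rfl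
    have hκs : ∀ i (j : Fin ((S.A i).card - 1)),
        κ (some ⟨i, j⟩) = if (j : ℕ) = (t i : ℕ) then 1 else 0 := fun _ _ => rfl
    have hrow : ∀ r : {r : S.Rows // S.label r ∈ B},
        dotProduct (M F S r.1) κ = 0 := by
      rintro ⟨⟨i, s⟩, hsB⟩
      have hst : s ≠ t i := fun h => (ht i) (h ▸ hsB)
      rw [dotProduct, Fintype.sum_option, ← Finset.univ_sigma_univ, Finset.sum_sigma]
      have hblocks : ∀ i' : Fin k, i' ≠ i →
          ∑ j : Fin ((S.A i').card - 1), M F S ⟨i, s⟩ (some ⟨i', j⟩) * κ (some ⟨i', j⟩) = 0 := by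
        intro i' hi'
        apply Finset.sum_eq_zero
        intro j _
        have : M F S ⟨i, s⟩ (some ⟨i', j⟩) = 0 := by
          simp [M, hi']
        rw [this, zero_mul]
      rw [Finset.sum_eq_single i (fun i' _ hi' => hblocks i' hi') (by simp)]
      by_cases hlast : (s : ℕ) = (S.A i).card - 1
      · have hti : (t i : ℕ) < (S.A i).card - 1 := by
          have h1 := (t i).isLt
          have h2 := s.isLt
          rcases Nat.lt_or_ge (t i : ℕ) ((S.A i).card - 1) with h | h
          · exact h
          · exact absurd (Fin.ext (by omega : (s:ℕ) = (t i : ℕ))) hst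
        have h1 : M F S ⟨i, s⟩ none = 1 := by simp [M, hlast]
        have h2 : ∀ j : Fin ((S.A i).card - 1),
            M F S ⟨i, s⟩ (some ⟨i, j⟩) = -1 := by
          intro j; simp [M, hlast]
        rw [h1, hκn, mul_one]
        have : ∑ j : Fin ((S.A i).card - 1),
            M F S ⟨i, s⟩ (some ⟨i, j⟩) * κ (some ⟨i, j⟩)
            = ∑ j : Fin ((S.A i).card - 1),
              (if (j : ℕ) = (t i : ℕ) then (-1 : F) else 0) := by
          apply Finset.sum_congr rfl
          intro j _
          rw [h2 j, hκs]
          split <;> simp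
        rw [this, sum_ite_coe_lt hti]
        ring
      · have h1 : M F S ⟨i, s⟩ none = 0 := by simp [M, hlast]
        rw [h1, zero_mul, zero_add]
        apply Finset.sum_eq_zero
        intro j _
        have hM : M F S ⟨i, s⟩ (some ⟨i, j⟩)
            = if (j : ℕ) = (s : ℕ) then 1 else 0 := by
          simp [M, hlast]
        rw [hM, hκs]
        by_cases hjt : (j : ℕ) = (t i : ℕ)
        · rw [if_neg (fun h => hst (Fin.ext (by omega))), zero_mul]
        · rw [if_neg hjt, mul_zero]
    have horth : ∀ w ∈ Submodule.span F
        (Set.range fun r : {r : S.Rows // S.label r ∈ B} => M F S r.1),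
        dotProduct w κ = 0 := by
      intro w hw
      induction hw using Submodule.span_induction with
      | mem x hx => obtain ⟨r, rfl⟩ := hx; exact hrow r
      | zero => simp [dotProduct]
      | add x y _ _ hx hy => rw [add_dotProduct, hx, hy, add_zero]
      | smul a x _ hx => rw [smul_dotProduct, hx, smul_zero]
    have := horth _ hmem
    rw [dotProduct, Fintype.sum_option] at this
    have heps : ∀ c : S.Cols, c ≠ none → eps1 F S c = 0 := by
      rintro (_ | c) h
      · exact absurd rfl h
      · rfl
    simp only [show eps1 F S none = 1 from rfl, hκn, mul_one] at this
    rw [Finset.sum_eq_zero (fun x _ => by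
      rw [show eps1 F S (some x) = 0 from rfl, zero_mul])] at this
    simp at this
  · rintro ⟨i, hi⟩
    have hcard : 0 < (S.A i).card := Finset.card_pos.mpr (S.nonempty i)
    have hsum : eps1 F S = ∑ j : Fin ((S.A i).card), M F S ⟨i, j⟩ := by
      funext c
      rw [Finset.sum_apply]
      match c with
      | none =>
        have : ∀ j : Fin ((S.A i).card),
            M F S ⟨i, j⟩ none = if (j : ℕ) = (S.A i).card - 1 then 1 else 0 :=
          fun j => rfl
        simp only [this]
        rw [sum_ite_coe_lt (by omega)]
        rfl
      | some ⟨i', j'⟩ =>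
        by_cases hi' : i' = i
        · subst hi'
          have hj' : (j' : ℕ) < (S.A i').card - 1 := j'.isLt
          have : ∀ j : Fin ((S.A i').card),
              M F S ⟨i', j⟩ (some ⟨i', j'⟩)
              = (if (j : ℕ) = (S.A i').card - 1 then (-1 : F) else 0)
                + (if (j : ℕ) = (j' : ℕ) then 1 else 0) := by
            intro j
            show (if (i' = i') then _ else _) = _
            rw [if_pos rfl]
            by_cases h1 : (j : ℕ) = (S.A i').card - 1
            · rw [if_pos h1, if_pos h1, if_neg (by omega), add_zero]
            · rw [if_neg h1, if_neg h1, zero_add]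
              simp [eq_comm]
          simp only [this]
          rw [Finset.sum_add_distrib, sum_ite_coe_lt (by omega),
            sum_ite_coe_lt (by omega : (j' : ℕ) < (S.A i').card)]
          show (0 : F) = -1 + 1
          ring
        · have : ∀ j : Fin ((S.A i).card),
              M F S ⟨i, j⟩ (some ⟨i', j'⟩) = 0 := by
            intro j
            show (if i' = i then _ else (0:F)) = 0
            rw [if_neg hi']
          simp only [this]
          rw [Finset.sum_const_zero]
          rfl
    rw [hsum]
    apply Submodule.sum_mem
    intro j _
    have hlab : S.label ⟨i, j⟩ ∈ B := hi (S.enum i j).2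
    exact Submodule.subset_span ⟨⟨⟨i, j⟩, hlab⟩, rfl⟩
end

section
/- Suppose Γ is self-dual. Let A ⊆ P and p ∈ P∖A be such that A ∪ {p} ∉ Γ. Let A^p = {A_i ∈ Γ_min : p ∈ A_i and A_i ⊆ P∖A} and Ā^p = {A_i ∈ Γ_min : p ∈ A_i and A_i ⊄ P∖A}. Then rk(M_{A∪{p}}) = rk(M_A) + |A^p| + |Ā^p|, where rk denotes rank over F_q. -/
open MSP

theorem MSP.rows_li {F : Type*} [Field F] {n k : ℕ} (S : MSP n k)
    (B : Finset (Fin n)) (hB : ¬ S.auth B) :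
    LinearIndependent F (MSub F S B) := by
  classical
  refine Fintype.linearIndependent_iff.mpr ?_
  intro g hg
  set G : S.Rows → F := fun r => if h : S.label r ∈ B then g ⟨r, h⟩ else 0 with hGdef
  have hG : ∀ c, ∑ r : S.Rows, G r * M F S r c = 0 := by
    intro c
    have h1 := congrFun hg c
    simp only [Finset.sum_apply, Pi.smul_apply, Pi.zero_apply, smul_eq_mul] at h1
    rw [← h1]
    rw [← Finset.sum_filter_of_ne (p := fun r => S.label r ∈ B)
      (by intro x _ hx; by_contra h; simp [hGdef, h] at hx)]
    rw [Finset.sum_subtype (p := fun r => S.label r ∈ B)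
      (Finset.univ.filter (fun r => S.label r ∈ B)) (by intro x; simp)]
    apply Finset.sum_congr rfl
    intro x _
    simp [hGdef, x.2, MSub]
  have hcard : ∀ i, 0 < (S.A i).card := fun i => Finset.card_pos.2 (S.nonempty i)
  have key : ∀ (i : Fin k) (j' : Fin ((S.A i).card - 1)),
      G ⟨i, ⟨(j' : ℕ), lt_of_lt_of_le j'.2 (Nat.sub_le _ _)⟩⟩
        = G ⟨i, ⟨(S.A i).card - 1, Nat.sub_lt (hcard i) one_pos⟩⟩ := by
    intro i j'
    have h := hG (some ⟨i, j'⟩)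
    rw [← Finset.univ_sigma_univ, Finset.sum_sigma] at h
    rw [Finset.sum_eq_single i (fun i' _ hne => Finset.sum_eq_zero (fun j _ => by
        simp only [M, Matrix.of_apply, if_neg (Ne.symm hne), mul_zero]))
      (fun h => absurd (Finset.mem_univ i) h)] at h
    have hrw : ∀ j : Fin ((S.A i).card), G ⟨i, j⟩ * M F S ⟨i, j⟩ (some ⟨i, j'⟩)
        = (if j = ⟨(S.A i).card - 1, Nat.sub_lt (hcard i) one_pos⟩ then -G ⟨i, j⟩ else 0)
          + (if j = ⟨(j' : ℕ), lt_of_lt_of_le j'.2 (Nat.sub_le _ _)⟩ then G ⟨i, j⟩ else 0) := by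
      intro j
      have hj' : (j' : ℕ) < (S.A i).card - 1 := j'.2
      simp only [M, Matrix.of_apply, if_pos rfl, Fin.ext_iff]
      split_ifs <;> first | omega | ring
    rw [Finset.sum_congr rfl (fun j _ => hrw j), Finset.sum_add_distrib,
      Finset.sum_ite_eq' Finset.univ, Finset.sum_ite_eq' Finset.univ] at h
    simp only [Finset.mem_univ, if_true] at h
    linear_combination h
  have key2 : ∀ i : Fin k, G ⟨i, ⟨(S.A i).card - 1, Nat.sub_lt (hcard i) one_pos⟩⟩ = 0 := by
    intro i
    have hni : ¬ S.A i ⊆ B := fun h => hB ⟨i, h⟩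
    obtain ⟨q, hq, hqB⟩ := Finset.not_subset.1 hni
    set jq := (S.enum i).symm ⟨q, hq⟩ with hjq
    have hlab : S.label ⟨i, jq⟩ = q := by
      simp [label, hjq]
    have hGq : G ⟨i, jq⟩ = 0 := by
      rw [hGdef]; dsimp only; rw [dif_neg]; rw [hlab]; exact hqB
    by_cases hc : (jq : ℕ) = (S.A i).card - 1
    · rw [← hGq]; congr 1; exact congrArg _ (Fin.ext hc.symm)
    · have hlt : (jq : ℕ) < (S.A i).card - 1 := by
        have := jq.2; omega
      have := key i ⟨(jq : ℕ), hlt⟩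
      rw [← this, ← hGq]
  have hGzero : ∀ r : S.Rows, G r = 0 := by
    rintro ⟨i, j⟩
    by_cases hc : (j : ℕ) = (S.A i).card - 1
    · rw [show (⟨i, j⟩ : S.Rows) = ⟨i, ⟨(S.A i).card - 1, Nat.sub_lt (hcard i) one_pos⟩⟩
        from congrArg _ (Fin.ext hc)]
      exact key2 i
    · have hlt : (j : ℕ) < (S.A i).card - 1 := by have := j.2; omega
      have := key i ⟨(j : ℕ), hlt⟩
      rw [show (⟨i, j⟩ : S.Rows) = ⟨i, ⟨(j : ℕ), lt_of_lt_of_le hlt (Nat.sub_le _ _)⟩⟩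
        from congrArg _ (Fin.ext rfl)]
      rw [this]; exact key2 i
  intro r
  have := hGzero r.1
  rw [hGdef] at this; dsimp only at this; rwa [dif_pos r.2] at this

theorem MSP.rank_unauth {F : Type*} [Field F] {n k : ℕ} (S : MSP n k)
    (B : Finset (Fin n)) (hB : ¬ S.auth B) :
    (MSub F S B).rank = Fintype.card {r : S.Rows // S.label r ∈ B} :=
  (S.rows_li B hB).rank_matrix

/-- Rows labelled `p` correspond to minimal sets containing `p`. -/
def MSP.rowsEquiv {n k : ℕ} (S : MSP n k) (p : Fin n) :
    {r : S.Rows // S.label r = p} ≃ {i : Fin k // p ∈ S.A i} where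
  toFun r := ⟨r.1.1, by
    have h : S.label r.1 ∈ S.A r.1.1 := (S.enum r.1.1 r.1.2).2
    rwa [r.2] at h⟩
  invFun i := ⟨⟨i.1, (S.enum i.1).symm ⟨p, i.2⟩⟩, by simp [label]⟩
  left_inv := by
    rintro ⟨⟨i, j⟩, h⟩
    have : (S.enum i).symm ⟨p, by rw [← h]; exact (S.enum i j).2⟩ = j := by
      rw [Equiv.symm_apply_eq]
      exact Subtype.ext h.symm
    exact Subtype.ext (Sigma.ext rfl (heq_of_eq this))
  right_inv := by rintro ⟨i, h⟩; rfl

theorem MSP.card_rows_insert {n k : ℕ} (S : MSP n k) (A : Finset (Fin n)) (p : Fin n) (hpA : p ∉ A) :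
    Fintype.card {r : S.Rows // S.label r ∈ insert p A}
      = Fintype.card {r : S.Rows // S.label r ∈ A}
        + Fintype.card {i : Fin k // p ∈ S.A i} := by
  classical
  rw [← Fintype.card_congr (S.rowsEquiv p)]
  simp only [Fintype.card_subtype]
  have h1 : Finset.univ.filter (fun r : S.Rows => S.label r ∈ insert p A)
      = Finset.univ.filter (fun r : S.Rows => S.label r ∈ A)
        ∪ Finset.univ.filter (fun r : S.Rows => S.label r = p) := by
    ext r
    simp [Finset.mem_insert, or_comm]
  have hd : Disjoint (Finset.univ.filter (fun r : S.Rows => S.label r ∈ A))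
      (Finset.univ.filter (fun r : S.Rows => S.label r = p)) := by
    rw [Finset.disjoint_left]
    intro r hr1 hr2
    simp only [Finset.mem_filter] at hr1 hr2
    exact hpA (hr2.2 ▸ hr1.2)
  rw [h1, Finset.card_union_of_disjoint hd]

theorem MSP.card_split {k : ℕ} (q C : Fin k → Prop) :
    Nat.card {i // q i} = Nat.card {i // q i ∧ C i} + Nat.card {i // q i ∧ ¬ C i} := by
  classical
  simp only [Nat.card_eq_fintype_card, Fintype.card_subtype]
  have h1 : Finset.univ.filter (fun i => q i ∧ C i)
      = (Finset.univ.filter q).filter C := by ext i; simp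
  have h2 : Finset.univ.filter (fun i => q i ∧ ¬ C i)
      = (Finset.univ.filter q).filter (fun i => ¬ C i) := by ext i; simp
  rw [h1, h2]
  exact (Finset.card_filter_add_card_filter_not (p := C)).symm


/-- Suppose `Γ` is self-dual.  If `A ⊆ P`, `p ∉ A` and
`A ∪ {p} ∉ Γ`, then with
`A^p = {A_i ∈ Γ_min : p ∈ A_i ∧ A_i ⊆ P∖A}` and
`Ā^p = {A_i ∈ Γ_min : p ∈ A_i ∧ A_i ⊄ P∖A}`,
we have `rk(M_{A∪{p}}) = rk(M_A) + |A^p| + |Ā^p|`. -/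
theorem rank_insert_unauthorized {F : Type*} [Field F] [Fintype F] {n k : ℕ}
    (S : MSP n k) (hsd : S.selfDual) (A : Finset (Fin n)) (p : Fin n) (hpA : p ∉ A)
    (hA' : ¬ S.auth (insert p A)) :
    (MSub F S (insert p A)).rank = (MSub F S A).rank
      + Nat.card {i : Fin k // p ∈ S.A i ∧ S.A i ⊆ Finset.univ \ A}
      + Nat.card {i : Fin k // p ∈ S.A i ∧ ¬ S.A i ⊆ Finset.univ \ A} := by
  classical
  have hA : ¬ S.auth A := fun ⟨i, hi⟩ => hA' ⟨i, hi.trans (Finset.subset_insert p A)⟩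
  rw [S.rank_unauth _ hA', S.rank_unauth _ hA, MSP.card_rows_insert S A p hpA]
  simp only [← Nat.card_eq_fintype_card]
  rw [MSP.card_split (fun i => p ∈ S.A i) (fun i => S.A i ⊆ Finset.univ \ A), add_assoc]
end

section
/- Suppose Γ is self-dual. Let A ⊆ P and p ∈ P∖A be such that A ∪ {p} ∉ Γ. Let Ā^p = {A_i ∈ Γ_min : p ∈ A_i and A_i ⊄ P∖A}. Then rk(M_{P∖(A∪{p})}) = rk(M_{P∖A}) − |Ā^p|, where rk denotes rank over F_q. -/
open MSP

namespace MSP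

variable {F : Type*} [Field F] {n k : ℕ}

lemma M_none (S : MSP n k) (r : S.Rows) :
    M F S r none = if (r.2 : ℕ) = (S.A r.1).card - 1 then 1 else 0 := rfl

lemma M_some (S : MSP n k) (r : S.Rows) (i : Fin k) (j : Fin ((S.A i).card - 1)) :
    M F S r (some ⟨i, j⟩) =
      if i = r.1 then
        (if (r.2 : ℕ) = (S.A r.1).card - 1 then -1
         else if (j : ℕ) = (r.2 : ℕ) then 1 else 0)
      else 0 := rfl

/-- Sum over `Fin m` of an indicator supported at value `a < m`. -/
lemma sum_ite_val {M : Type*} [AddCommMonoid M] {m : ℕ} (a : ℕ) (ha : a < m) (c : M) :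
    ∑ j : Fin m, (if (j : ℕ) = a then c else 0) = c := by
  have h : ∀ j : Fin m, ((j : ℕ) = a) = (j = ⟨a, ha⟩) := fun j => by
    simp [Fin.ext_iff]
  simp_rw [h]
  simp

/-- Rows kept in our explicit basis of the row space of `MSub F S B`:
rows labelled by players of `B` which are not the last row of a block fully
contained in `B`. -/
def goodRow (S : MSP n k) (B : Finset (Fin n)) (r : S.Rows) : Prop :=
  S.label r ∈ B ∧ ¬ ((r.2 : ℕ) = (S.A r.1).card - 1 ∧ S.A r.1 ⊆ B)

instance (S : MSP n k) (B : Finset (Fin n)) : DecidablePred (S.goodRow B) := fun r => by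
  unfold goodRow; infer_instance

/-- The explicit spanning family: `ε₁` together with the good rows. -/
def basisFam (F : Type*) [Field F] (S : MSP n k) (B : Finset (Fin n)) :
    Option {r : S.Rows // S.goodRow B r} → (S.Cols → F)
  | none => eps1 F S
  | some r => M F S r.1

lemma card_pos (S : MSP n k) (i : Fin k) : 0 < (S.A i).card :=
  Finset.card_pos.mpr (S.nonempty i)

/-- The sum of all rows of a block is `ε₁`. -/
lemma sum_block (S : MSP n k) (i0 : Fin k) :
    ∑ j : Fin ((S.A i0).card), M F S ⟨i0, j⟩ = (eps1 F S : S.Cols → F) := by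
  funext c
  rw [Finset.sum_apply]
  match c with
  | none =>
      have hlt : (S.A i0).card - 1 < (S.A i0).card := by
        have := S.card_pos i0; omega
      simp only [M_none]
      rw [sum_ite_val _ hlt (1 : F)]
      rfl
  | some ⟨i, j⟩ =>
      by_cases hi : i = i0
      · subst hi
        have hlt : (S.A i).card - 1 < (S.A i).card := by
          have := S.card_pos i; omega
        have hjlt : (j : ℕ) < (S.A i).card - 1 := j.2
        have key : ∀ j' : Fin ((S.A i).card),
            (M F S ⟨i, j'⟩ (some ⟨i, j⟩) : F) =
              (if (j' : ℕ) = (S.A i).card - 1 then (-1 : F) else 0)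
              + (if (j' : ℕ) = (j : ℕ) then 1 else 0) := by
          intro j'
          rw [M_some, if_pos rfl]
          by_cases h1 : (j' : ℕ) = (S.A i).card - 1
          · have h2 : ¬ ((j' : ℕ) = (j : ℕ)) := by omega
            have h3 : ¬ ((j : ℕ) = (j' : ℕ)) := by omega
            rw [if_pos h1, if_pos h1, if_neg h2, add_zero]
          · by_cases h2 : (j : ℕ) = (j' : ℕ)
            · rw [if_neg h1, if_pos h2, if_neg h1, if_pos h2.symm, zero_add]
            · have h3 : ¬ ((j' : ℕ) = (j : ℕ)) := by omega
              rw [if_neg h1, if_neg h2, if_neg h1, if_neg h3, zero_add]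
        simp only [key]
        rw [Finset.sum_add_distrib, sum_ite_val _ hlt ((-1 : F)),
          sum_ite_val _ (lt_trans hjlt hlt) (1 : F)]
        simp [eps1]
      · have key : ∀ j' : Fin ((S.A i0).card),
            (M F S ⟨i0, j'⟩ (some ⟨i, j⟩) : F) = 0 := by
          intro j'
          rw [M_some, if_neg hi]
        simp [key, eps1]

lemma eps1_mem (S : MSP n k) {B : Finset (Fin n)} (hB : S.auth B) :
    (eps1 F S : S.Cols → F) ∈ Submodule.span F (Set.range (MSub F S B)) := by
  obtain ⟨i0, hi0⟩ := hB
  rw [← sum_block (F := F) S i0]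
  refine Submodule.sum_mem _ fun j _ => ?_
  exact Submodule.subset_span ⟨⟨⟨i0, j⟩, hi0 (S.enum i0 j).2⟩, rfl⟩

/-- The last row of a block is `ε₁` minus the sum of the identity rows. -/
lemma lastRow (S : MSP n k) (i : Fin k) (j : Fin ((S.A i).card))
    (hj : (j : ℕ) = (S.A i).card - 1) :
    M F S ⟨i, j⟩ = (eps1 F S : S.Cols → F)
      - ∑ c : Fin ((S.A i).card - 1),
          M F S ⟨i, ⟨(c : ℕ), lt_of_lt_of_le c.2 (Nat.sub_le _ _)⟩⟩ := by
  funext col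
  rw [Pi.sub_apply, Finset.sum_apply]
  match col with
  | none =>
      have : ∀ c : Fin ((S.A i).card - 1),
          (M F S ⟨i, ⟨(c : ℕ), lt_of_lt_of_le c.2 (Nat.sub_le _ _)⟩⟩ none : F) = 0 := by
        intro c
        rw [M_none, if_neg]
        have := c.2
        simp only []
        omega
      rw [M_none, if_pos hj]
      simp [this, eps1]
  | some ⟨i', c'⟩ =>
      by_cases hi : i' = i
      · subst hi
        have key : ∀ c : Fin ((S.A i').card - 1),
            (M F S ⟨i', ⟨(c : ℕ), lt_of_lt_of_le c.2 (Nat.sub_le _ _)⟩⟩ (some ⟨i', c'⟩) : F)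
              = if (c : ℕ) = (c' : ℕ) then 1 else 0 := by
          intro c
          rw [M_some, if_pos rfl]
          have h1 : ¬ ((c : ℕ) = (S.A i').card - 1) := by have := c.2; omega
          rw [if_neg h1]
          by_cases h2 : (c' : ℕ) = (c : ℕ)
          · rw [if_pos h2, if_pos h2.symm]
          · rw [if_neg h2, if_neg (fun h => h2 h.symm)]
        simp only [key]
        rw [sum_ite_val (c' : ℕ) c'.2 (1 : F)]
        rw [M_some, if_pos rfl, if_pos hj]
        simp [eps1]
      · have key : ∀ c : Fin ((S.A i).card - 1),
            (M F S ⟨i, ⟨(c : ℕ), lt_of_lt_of_le c.2 (Nat.sub_le _ _)⟩⟩ (some ⟨i', c'⟩) : F) = 0 := by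
          intro c
          rw [M_some, if_neg hi]
        rw [M_some, if_neg hi]
        simp [key, eps1]

lemma span_basis (S : MSP n k) {B : Finset (Fin n)} (hB : S.auth B) :
    Submodule.span F (Set.range (basisFam F S B)) =
      Submodule.span F (Set.range (MSub F S B)) := by
  apply le_antisymm
  · rw [Submodule.span_le]
    rintro _ ⟨x, rfl⟩
    match x with
    | none => exact eps1_mem S hB
    | some r => exact Submodule.subset_span ⟨⟨r.1, r.2.1⟩, rfl⟩
  · rw [Submodule.span_le]
    rintro _ ⟨⟨r, hr⟩, rfl⟩
    show (M F S r : S.Cols → F) ∈ _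
    by_cases hg : S.goodRow B r
    · exact Submodule.subset_span ⟨some ⟨r, hg⟩, rfl⟩
    · have h2 : (r.2 : ℕ) = (S.A r.1).card - 1 ∧ S.A r.1 ⊆ B := by
        by_contra h
        exact hg ⟨hr, h⟩
      have : M F S r = M F S ⟨r.1, r.2⟩ := rfl
      rw [this, lastRow S r.1 r.2 h2.1]
      apply Submodule.sub_mem
      · exact Submodule.subset_span ⟨none, rfl⟩
      · refine Submodule.sum_mem _ fun c _ => ?_
        refine Submodule.subset_span ⟨some ⟨⟨r.1, ⟨(c : ℕ), _⟩⟩, ?_, ?_⟩, rfl⟩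
        · exact h2.2 (S.enum r.1 _).2
        · rintro ⟨h3, -⟩
          have := c.2
          simp only [] at h3
          omega

lemma li_basis (S : MSP n k) (B : Finset (Fin n)) :
    LinearIndependent F (basisFam F S B) := by
  rw [Fintype.linearIndependent_iff]
  intro g hg
  have hcol : ∀ c : S.Cols, ∑ x, g x * basisFam F S B x c = 0 := by
    intro c
    have h := congrFun hg c
    simpa [Finset.sum_apply] using h
  -- Step (a): coefficients of last rows vanish.
  have hlast : ∀ x : {r : S.Rows // S.goodRow B r},
      ((x : S.Rows).2 : ℕ) = (S.A (x : S.Rows).1).card - 1 → g (some x) = 0 := by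
    rintro ⟨⟨i, j⟩, hgood⟩ hj
    replace hj : (j : ℕ) = (S.A i).card - 1 := hj
    have hnf : ¬ S.A i ⊆ B := fun hsub => hgood.2 ⟨hj, hsub⟩
    obtain ⟨q, hq, hqB⟩ := Finset.not_subset.mp hnf
    set j0 := (S.enum i).symm ⟨q, hq⟩ with hj0def
    have hq' : (S.enum i j0 : Fin n) = q := by
      rw [hj0def, Equiv.apply_symm_apply]
    have hj0ne : (j0 : ℕ) ≠ (S.A i).card - 1 := by
      intro h
      have hjj : j0 = j := Fin.ext (by omega)
      have hlab : S.label ⟨i, j⟩ = q := by rw [← hjj]; exact hq'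
      exact hqB (hlab ▸ hgood.1)
    have hj0lt : (j0 : ℕ) < (S.A i).card - 1 := by
      have h1 : (j0 : ℕ) < (S.A i).card := j0.2
      omega
    have h0 := hcol (some ⟨i, ⟨(j0 : ℕ), hj0lt⟩⟩)
    rw [Finset.sum_eq_single (some ⟨⟨i, j⟩, hgood⟩)] at h0
    · rw [basisFam, M_some, if_pos rfl, if_pos hj] at h0
      simpa using h0
    · rintro x - hne
      match x with
      | none => simp [basisFam, eps1]
      | some ⟨⟨i', j'⟩, hg'⟩ =>
        rw [basisFam, M_some]
        by_cases hii : i = i'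
        · subst hii
          rw [if_pos rfl]
          have hne1 : ¬ ((j' : ℕ) = (S.A i).card - 1) := by
            intro h
            apply hne
            have : j' = j := Fin.ext (by omega)
            subst this
            rfl
          have hne2 : ¬ ((j0 : ℕ) = (j' : ℕ)) := by
            intro h
            have : j' = j0 := Fin.ext h.symm
            subst this
            exact hqB (hq' ▸ hg'.1)
          rw [if_neg hne1, if_neg hne2, mul_zero]
        · rw [if_neg hii, mul_zero]
    · intro h
      exact absurd (Finset.mem_univ _) h
  -- Step (b): coefficients of all rows vanish.
  have hrow : ∀ x : {r : S.Rows // S.goodRow B r}, g (some x) = 0 := by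
    rintro ⟨⟨i, j⟩, hgood⟩
    by_cases hj : (j : ℕ) = (S.A i).card - 1
    · exact hlast ⟨⟨i, j⟩, hgood⟩ hj
    have hjlt : (j : ℕ) < (S.A i).card - 1 := by
      have h1 : (j : ℕ) < (S.A i).card := j.2
      omega
    have h0 := hcol (some ⟨i, ⟨(j : ℕ), hjlt⟩⟩)
    rw [Finset.sum_eq_single (some ⟨⟨i, j⟩, hgood⟩)] at h0
    · rw [basisFam, M_some, if_pos rfl, if_neg hj, if_pos rfl, mul_one] at h0
      exact h0
    · rintro x - hne
      match x with
      | none => simp [basisFam, eps1]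
      | some ⟨⟨i', j'⟩, hg'⟩ =>
        rw [basisFam, M_some]
        by_cases hii : i = i'
        · subst hii
          rw [if_pos rfl]
          by_cases hl : (j' : ℕ) = (S.A i).card - 1
          · rw [hlast ⟨⟨i, j'⟩, hg'⟩ hl, zero_mul]
          · have hne2 : ¬ ((j : ℕ) = (j' : ℕ)) := by
              intro h
              apply hne
              have : j' = j := Fin.ext h.symm
              subst this
              rfl
            rw [if_neg hl, if_neg hne2, mul_zero]
        · rw [if_neg hii, mul_zero]
    · intro h
      exact absurd (Finset.mem_univ _) h
  -- Step (c): the coefficient of ε₁ vanishes.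
  have hnone : g none = 0 := by
    have h0 := hcol none
    rw [Finset.sum_eq_single (none : Option {r : S.Rows // S.goodRow B r})] at h0
    · simpa [basisFam, eps1] using h0
    · rintro x - hne
      match x with
      | none => exact absurd rfl hne
      | some r => rw [hrow r, zero_mul]
    · intro h
      exact absurd (Finset.mem_univ _) h
  intro x
  match x with
  | none => exact hnone
  | some r => exact hrow r

lemma rank_eq (S : MSP n k) {B : Finset (Fin n)} (hB : S.auth B) :
    (MSub F S B).rank = Fintype.card (Option {r : S.Rows // S.goodRow B r}) := by
  rw [Matrix.rank_eq_finrank_span_row]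
  change Module.finrank F ↥(Submodule.span F (Set.range (MSub F S B))) = _
  rw [← span_basis S hB,
    finrank_span_eq_card (li_basis (F := F) S B)]

/-- Decompose a subtype of a sigma type blockwise. -/
def sigmaSubtypeEquiv {α : Type*} {β : α → Type*} (p : ∀ a, β a → Prop) :
    {x : Σ a, β a // p x.1 x.2} ≃ Σ a, {b : β a // p a b} where
  toFun x := ⟨x.1.1, x.1.2, x.2⟩
  invFun x := ⟨⟨x.1, x.2.1⟩, x.2.2⟩
  left_inv := fun ⟨⟨_, _⟩, _⟩ => rfl
  right_inv := fun ⟨_, _, _⟩ => rfl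

lemma count_block (S : MSP n k) (B : Finset (Fin n)) (p : Fin n) (hp : p ∈ B) (i : Fin k) :
    Fintype.card {j : Fin ((S.A i).card) // S.goodRow B ⟨i, j⟩}
      = Fintype.card {j : Fin ((S.A i).card) // S.goodRow (B.erase p) ⟨i, j⟩}
        + (if p ∈ S.A i ∧ ¬ S.A i ⊆ B then 1 else 0) := by
  classical
  by_cases hpA : p ∈ S.A i
  · have hnotsub' : ¬ S.A i ⊆ B.erase p := fun h => (Finset.mem_erase.mp (h hpA)).1 rfl
    set jp : Fin ((S.A i).card) := (S.enum i).symm ⟨p, hpA⟩ with hjp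
    have hjpval : (S.enum i jp : Fin n) = p := by rw [hjp, Equiv.apply_symm_apply]
    have hmem : ∀ j, S.label ⟨i, j⟩ ∈ B.erase p ↔ (S.label ⟨i, j⟩ ∈ B ∧ j ≠ jp) := by
      intro j
      rw [Finset.mem_erase]
      constructor
      · rintro ⟨h1, h2⟩
        refine ⟨h2, fun h => h1 ?_⟩
        rw [h]
        exact hjpval
      · rintro ⟨h2, h1⟩
        refine ⟨fun h => h1 ?_, h2⟩
        apply (S.enum i).injective
        apply Subtype.ext
        rw [hjpval]
        exact h
    by_cases hsub : S.A i ⊆ B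
    · rw [if_neg (by tauto)]
      have e1 : ∀ j : Fin ((S.A i).card), S.goodRow B ⟨i, j⟩ ↔ ¬ ((j : ℕ) = (S.A i).card - 1) := by
        intro j
        unfold goodRow
        simp only []
        constructor
        · rintro ⟨-, h⟩ hj
          exact h ⟨hj, hsub⟩
        · intro h
          exact ⟨hsub (S.enum i j).2, fun hh => h hh.1⟩
      have e2 : ∀ j : Fin ((S.A i).card), S.goodRow (B.erase p) ⟨i, j⟩ ↔ ¬ (j = jp) := by
        intro j
        unfold goodRow
        simp only []
        rw [hmem]
        constructor
        · rintro ⟨⟨-, h⟩, -⟩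
          exact h
        · intro h
          exact ⟨⟨hsub (S.enum i j).2, h⟩, fun hh => hnotsub' hh.2⟩
      rw [Fintype.card_congr (Equiv.subtypeEquivRight e1),
        Fintype.card_congr (Equiv.subtypeEquivRight e2)]
      have hlt : (S.A i).card - 1 < (S.A i).card := by have := S.card_pos i; omega
      have e3 : ∀ j : Fin ((S.A i).card),
          (¬ ((j : ℕ) = (S.A i).card - 1)) ↔ ¬ (j = ⟨(S.A i).card - 1, hlt⟩) := by
        intro j
        rw [Fin.ext_iff]
      rw [Fintype.card_congr (Equiv.subtypeEquivRight e3)]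
      rw [Fintype.card_subtype_compl, Fintype.card_subtype_compl,
        Fintype.card_subtype_eq, Fintype.card_subtype_eq, add_zero]
    · rw [if_pos ⟨hpA, hsub⟩]
      have e1 : ∀ j : Fin ((S.A i).card), S.goodRow B ⟨i, j⟩ ↔ S.label ⟨i, j⟩ ∈ B := by
        intro j
        unfold goodRow
        exact ⟨fun h => h.1, fun h => ⟨h, fun hh => hsub hh.2⟩⟩
      have e2 : ∀ j : Fin ((S.A i).card),
          S.goodRow (B.erase p) ⟨i, j⟩ ↔ (S.label ⟨i, j⟩ ∈ B ∧ j ≠ jp) := by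
        intro j
        unfold goodRow
        rw [hmem]
        exact ⟨fun h => h.1, fun h => ⟨h, fun hh => hnotsub' hh.2⟩⟩
      rw [Fintype.card_congr (Equiv.subtypeEquivRight e1),
        Fintype.card_congr (Equiv.subtypeEquivRight e2)]
      rw [Fintype.card_subtype, Fintype.card_subtype]
      have hfe : Finset.univ.filter (fun j : Fin ((S.A i).card) => S.label ⟨i, j⟩ ∈ B ∧ j ≠ jp)
          = (Finset.univ.filter (fun j : Fin ((S.A i).card) => S.label ⟨i, j⟩ ∈ B)).erase jp := by
        ext j
        simp only [Finset.mem_filter, Finset.mem_erase, Finset.mem_univ, true_and]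
        tauto
      rw [hfe]
      rw [Finset.card_erase_add_one]
      simp only [Finset.mem_filter, Finset.mem_univ, true_and]
      show (S.enum i jp : Fin n) ∈ B
      rw [hjpval]
      exact hp
  · rw [if_neg (by tauto), add_zero]
    have e : ∀ j : Fin ((S.A i).card), S.goodRow B ⟨i, j⟩ ↔ S.goodRow (B.erase p) ⟨i, j⟩ := by
      intro j
      have hne : S.label ⟨i, j⟩ ≠ p := by
        intro h
        exact hpA (h ▸ (S.enum i j).2)
      have h1 : S.label ⟨i, j⟩ ∈ B.erase p ↔ S.label ⟨i, j⟩ ∈ B := by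
        rw [Finset.mem_erase]
        exact ⟨fun h => h.2, fun h => ⟨hne, h⟩⟩
      have h2 : (S.A i ⊆ B.erase p) ↔ (S.A i ⊆ B) := by
        constructor
        · intro h x hx
          exact (Finset.mem_erase.mp (h hx)).2
        · intro h x hx
          exact Finset.mem_erase.mpr ⟨fun he => hpA (he ▸ hx), h hx⟩
      unfold goodRow
      rw [h1, h2]
    exact Fintype.card_congr (Equiv.subtypeEquivRight e)

lemma count_total (S : MSP n k) (B : Finset (Fin n)) (p : Fin n) (hp : p ∈ B) :
    Fintype.card {r : S.Rows // S.goodRow B r}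
      = Fintype.card {r : S.Rows // S.goodRow (B.erase p) r}
        + (Finset.univ.filter (fun i : Fin k => p ∈ S.A i ∧ ¬ S.A i ⊆ B)).card := by
  classical
  have h1 : ∀ C : Finset (Fin n), Fintype.card {r : S.Rows // S.goodRow C r}
      = ∑ i : Fin k, Fintype.card {j : Fin ((S.A i).card) // S.goodRow C ⟨i, j⟩} := by
    intro C
    rw [Fintype.card_congr (sigmaSubtypeEquiv (fun i j => S.goodRow C ⟨i, j⟩)),
      Fintype.card_sigma]
  rw [h1, h1]
  rw [Finset.card_filter]
  rw [← Finset.sum_add_distrib]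
  exact Finset.sum_congr rfl fun i _ => count_block S B p hp i

end MSP



/-- Suppose `Γ` is self-dual.  If `A ⊆ P`, `p ∉ A` and
`A ∪ {p} ∉ Γ`, then with `Ā^p = {A_i ∈ Γ_min : p ∈ A_i ∧ A_i ⊄ P∖A}`,
we have `rk(M_{P∖(A∪{p})}) = rk(M_{P∖A}) − |Ā^p|` (an equality of integers). -/
theorem rank_complement_insert_unauthorized {F : Type*} [Field F] [Fintype F] {n k : ℕ}
    (S : MSP n k) (hsd : S.selfDual) (A : Finset (Fin n)) (p : Fin n) (hpA : p ∉ A)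
    (hA' : ¬ S.auth (insert p A)) :
    ((MSub F S (Finset.univ \ insert p A)).rank : ℤ) =
      ((MSub F S (Finset.univ \ A)).rank : ℤ)
        - Nat.card {i : Fin k // p ∈ S.A i ∧ ¬ S.A i ⊆ Finset.univ \ A} := by
  classical
  set B : Finset (Fin n) := Finset.univ \ A with hBdef
  have hpB : p ∈ B := by simp [hBdef, hpA]
  have hBB : Finset.univ \ insert p A = B.erase p := by
    ext x
    simp only [hBdef, Finset.mem_sdiff, Finset.mem_erase, Finset.mem_univ, true_and,
      Finset.mem_insert]
    tauto
  have hB' : S.auth (B.erase p) := by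
    rw [← hBB]
    by_contra h
    exact hA' ((hsd (insert p A)).mpr h)
  have hB : S.auth B := by
    obtain ⟨i, hi⟩ := hB'
    exact ⟨i, hi.trans (Finset.erase_subset _ _)⟩
  rw [hBB, rank_eq S hB', rank_eq S hB, Fintype.card_option, Fintype.card_option,
    count_total S B p hpB]
  have hc : Nat.card {i : Fin k // p ∈ S.A i ∧ ¬ S.A i ⊆ B}
      = (Finset.univ.filter (fun i : Fin k => p ∈ S.A i ∧ ¬ S.A i ⊆ B)).card := by
    rw [Nat.card_eq_fintype_card, Fintype.card_subtype]
  rw [hc]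
  push_cast
  ring
end

section
/- (Theorem 3, authorized case, rank form.) Suppose Γ is self-dual. If A ⊆ B ⊆ P with A ∈ Γ and B ∈ Γ, then rk(M_A) + rk(M_{P∖A}) ≥ rk(M_B) + rk(M_{P∖B}), where rk denotes rank over F_q. (By the entropy formula S(X) = (rk(M_X) + rk(M_{P∖X}) − rk(M))·log₂ q + S(S) for authorized X, this expresses that the von Neumann entropy of the shares of authorized sets of the normal-form quantum secret sharing scheme is monotonically nonincreasing: S(A) ≥ S(B).) -/
namespace MSP

variable {n k : ℕ}

variable {F : Type*} [Field F] (S : MSP n k)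

/-- The last row index of block `i`. -/
def lastIdx (i : Fin k) : Fin ((S.A i).card) :=
  ⟨(S.A i).card - 1, Nat.sub_lt (Finset.card_pos.mpr (S.nonempty i)) one_pos⟩

/-- Evaluation of a linear combination of the rows of `M` at a column of block `i`. -/
lemma sum_mul_apply (g : S.Rows → F) (i : Fin k) (j0 : Fin ((S.A i).card - 1)) :
    ∑ r : S.Rows, g r * M F S r (some ⟨i, j0⟩) =
      g ⟨i, Fin.castLE (Nat.sub_le _ _) j0⟩ - g ⟨i, S.lastIdx i⟩ := by
  rw [← Finset.univ_sigma_univ, Finset.sum_sigma]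
  rw [Finset.sum_eq_single i]
  · have hentry : ∀ j' : Fin ((S.A i).card),
        M F S ⟨i, j'⟩ (some ⟨i, j0⟩) =
          (if (j0 : ℕ) = (j' : ℕ) then (1 : F) else 0)
            - (if (j' : ℕ) = (S.A i).card - 1 then 1 else 0) := by
      intro j'
      have hj0 : (j0 : ℕ) < (S.A i).card - 1 := j0.isLt
      by_cases h2 : (j' : ℕ) = (S.A i).card - 1
      · have h3 : ¬((j0 : ℕ) = (j' : ℕ)) := by omega
        have h4 : ¬((j0 : ℕ) = (S.A i).card - 1) := by omega
        simp [M, h2, h3, h4]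
      · by_cases h3 : (j0 : ℕ) = (j' : ℕ)
        · simp [M, h2, h3]
        · simp [M, h2, h3]
    simp only [hentry, mul_sub]
    rw [Finset.sum_sub_distrib]
    congr 1
    · rw [Finset.sum_eq_single (Fin.castLE (Nat.sub_le _ _) j0)]
      · simp
      · intro b _ hb
        have hne : ¬ ((j0 : ℕ) = (b : ℕ)) := by
          intro h; apply hb; apply Fin.ext; simpa using h.symm
        simp [hne]
      · simp
    · rw [Finset.sum_eq_single (S.lastIdx i)]
      · simp [lastIdx]
      · intro b _ hb
        have hne : ¬ ((b : ℕ) = (S.A i).card - 1) := by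
          intro h; apply hb; apply Fin.ext; simpa [lastIdx] using h
        simp [hne]
      · simp
  · intro i' _ hi'
    apply Finset.sum_eq_zero
    intro j' _
    simp [M, hi'.symm]
  · simp

/-- The rows of `M` labelled by an unauthorized set are linearly independent. -/
lemma rows_linearIndependent (Z : Finset (Fin n)) (hZ : ¬ S.auth Z) :
    LinearIndependent F (fun r : {r : S.Rows // S.label r ∈ Z} => M F S r.1) := by
  rw [Fintype.linearIndependent_iff]
  intro g hg
  classical
  set G : S.Rows → F := fun r => if h : S.label r ∈ Z then g ⟨r, h⟩ else 0 with hGdef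
  have hsum : ∀ i : Fin k, ∀ j0 : Fin ((S.A i).card - 1),
      ∑ r : S.Rows, G r * M F S r (some ⟨i, j0⟩) = 0 := by
    intro i j0
    set col : S.Cols := some ⟨i, j0⟩
    have h1 : ∑ r : {r : S.Rows // S.label r ∈ Z}, g r * M F S r.1 col = 0 := by
      have := congrFun hg col
      simpa [Finset.sum_apply] using this
    calc ∑ r : S.Rows, G r * M F S r col
        = ∑ r ∈ Finset.univ.filter (fun r => S.label r ∈ Z), G r * M F S r col := by
          refine (Finset.sum_filter_of_ne ?_).symm
          intro r _ hr
          by_contra h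
          exact hr (by simp [hGdef, h])
      _ = ∑ r : {r : S.Rows // S.label r ∈ Z}, G r.1 * M F S r.1 col := by
          rw [← Finset.sum_subtype_eq_sum_filter, Finset.subtype_univ]
      _ = ∑ r : {r : S.Rows // S.label r ∈ Z}, g r * M F S r.1 col := by
          apply Finset.sum_congr rfl
          intro r _
          simp [hGdef, r.2]
      _ = 0 := h1
  have hB : ∀ i : Fin k, ∀ j0 : Fin ((S.A i).card - 1),
      G ⟨i, Fin.castLE (Nat.sub_le _ _) j0⟩ = G ⟨i, S.lastIdx i⟩ := by
    intro i j0
    have := (S.sum_mul_apply G i j0).symm.trans (hsum i j0)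
    exact sub_eq_zero.mp this
  have hA : ∀ i : Fin k, G ⟨i, S.lastIdx i⟩ = 0 := by
    intro i
    by_cases h : S.label ⟨i, S.lastIdx i⟩ ∈ Z
    · -- the last player of block i is in Z; find a player of A i outside Z
      have : ¬ S.A i ⊆ Z := fun hsub => hZ ⟨i, hsub⟩
      obtain ⟨p, hpA, hpZ⟩ := Finset.not_subset.mp this
      set j' : Fin ((S.A i).card) := (S.enum i).symm ⟨p, hpA⟩ with hj'
      have hlab : S.label ⟨i, j'⟩ = p := by
        simp [label, hj', Equiv.apply_symm_apply]
      have hjne : (j' : ℕ) ≠ (S.A i).card - 1 := by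
        intro hval
        have : j' = S.lastIdx i := Fin.ext hval
        rw [this] at hlab
        exact hpZ (hlab ▸ h)
      have hjlt : (j' : ℕ) < (S.A i).card - 1 :=
        lt_of_le_of_ne (Nat.le_pred_of_lt j'.isLt) hjne
      have hcast : Fin.castLE (Nat.sub_le _ _) (⟨(j' : ℕ), hjlt⟩ : Fin ((S.A i).card - 1)) = j' :=
        Fin.ext rfl
      have := hB i ⟨(j' : ℕ), hjlt⟩
      rw [hcast] at this
      rw [← this]
      have : S.label ⟨i, j'⟩ ∉ Z := hlab ▸ hpZ
      simp [hGdef, this]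
    · simp [hGdef, h]
  intro r
  obtain ⟨⟨i, j⟩, hr⟩ := r
  have hgG : g ⟨⟨i, j⟩, hr⟩ = G ⟨i, j⟩ := by simp [hGdef, hr]
  rw [hgG]
  by_cases hj : (j : ℕ) = (S.A i).card - 1
  · have : (⟨i, j⟩ : S.Rows) = ⟨i, S.lastIdx i⟩ := by
      congr 1; exact Fin.ext hj
    rw [this]; exact hA i
  · have hjlt : (j : ℕ) < (S.A i).card - 1 :=
      lt_of_le_of_ne (Nat.le_pred_of_lt j.isLt) hj
    have hcast : Fin.castLE (Nat.sub_le _ _) (⟨(j : ℕ), hjlt⟩ : Fin ((S.A i).card - 1)) = j :=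
      Fin.ext rfl
    have := hB i ⟨(j : ℕ), hjlt⟩
    rw [hcast] at this
    rw [this]; exact hA i

/-- Unauthorized sets give full-row-rank submatrices. -/
lemma rank_MSub_of_unauth (Z : Finset (Fin n)) (hZ : ¬ S.auth Z) :
    (MSub F S Z).rank = Fintype.card {r : S.Rows // S.label r ∈ Z} := by
  have h : MSub F S Z = fun r : {r : S.Rows // S.label r ∈ Z} => M F S r.1 := rfl
  rw [h] at *
  exact (S.rows_linearIndependent Z hZ).rank_matrix

/-- Adding rows increases the rank by at most the number of rows added. -/
lemma rank_MSub_le (X Y : Finset (Fin n)) (hXY : X ⊆ Y) :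
    (MSub F S Y).rank ≤ (MSub F S X).rank +
      Fintype.card {r : S.Rows // S.label r ∈ Y \ X} := by
  classical
  rw [Matrix.rank_eq_finrank_span_row, Matrix.rank_eq_finrank_span_row]
  have hle : Submodule.span F (Set.range (MSub F S Y)) ≤
      Submodule.span F (Set.range (MSub F S X)) ⊔
        Submodule.span F (Set.range (MSub F S (Y \ X))) := by
    rw [← Submodule.span_union]
    apply Submodule.span_le.mpr
    rintro v ⟨r, rfl⟩
    by_cases h : S.label r.1 ∈ X
    · exact Submodule.subset_span (Or.inl ⟨⟨r.1, h⟩, rfl⟩)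
    · have hm : S.label r.1 ∈ Y \ X := Finset.mem_sdiff.mpr ⟨r.2, h⟩
      exact Submodule.subset_span (Or.inr ⟨⟨r.1, hm⟩, rfl⟩)
  calc Module.finrank F (Submodule.span F (Set.range (MSub F S Y)))
      ≤ Module.finrank F
          (Submodule.span F (Set.range (MSub F S X)) ⊔
            Submodule.span F (Set.range (MSub F S (Y \ X))) : Submodule F (S.Cols → F)) :=
        Submodule.finrank_mono hle
    _ ≤ Module.finrank F (Submodule.span F (Set.range (MSub F S X))) +
          Module.finrank F (Submodule.span F (Set.range (MSub F S (Y \ X)))) :=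
        Submodule.finrank_add_le_finrank_add_finrank _ _
    _ ≤ _ := add_le_add le_rfl (finrank_range_le_card _)

/-- Counting the rows labelled by complements. -/
lemma card_rows_split (X Y : Finset (Fin n)) (hXY : X ⊆ Y) :
    Fintype.card {r : S.Rows // S.label r ∈ Finset.univ \ X} =
    Fintype.card {r : S.Rows // S.label r ∈ Finset.univ \ Y} +
    Fintype.card {r : S.Rows // S.label r ∈ Y \ X} := by
  classical
  simp only [Fintype.card_subtype]
  rw [← Finset.card_union_of_disjoint]
  · congr 1
    ext r
    have h := @hXY (S.label r)
    simp only [Finset.mem_union, Finset.mem_filter, Finset.mem_univ, true_and,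
      Finset.mem_sdiff]
    tauto
  · rw [Finset.disjoint_left]
    intro r hr hr'
    simp only [Finset.mem_filter, Finset.mem_univ, true_and, Finset.mem_sdiff] at hr hr'
    exact hr hr'.1

end MSP

open MSP

/-- `f(X) = rk(M_X) + rk(M_{P∖X})`, the rank functional governing the entropy
of the normal-form secret sharing state. -/
noncomputable def MSP.rkPair (F : Type*) [Field F] {n k : ℕ} (S : MSP n k) (X : Finset (Fin n)) : ℕ :=
  (MSub F S X).rank + (MSub F S (Finset.univ \ X)).rank

/-- Theorem 3, authorized case, rank form.  Suppose `Γ` is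
self-dual.  If `A ⊆ B ⊆ P` are both authorized, then
`rk(M_A) + rk(M_{P∖A}) ≥ rk(M_B) + rk(M_{P∖B})`.  Via the entropy formula
`S(X) = (rk(M_X) + rk(M_{P∖X}) − rk M)·log₂ q + S(secret)` for authorized `X`,
this says the von Neumann entropy of authorized sets is monotonically
nonincreasing. -/
theorem entropy_antitone_authorized {F : Type*} [Field F] [Fintype F] {n k : ℕ}
    (S : MSP n k) (hsd : S.selfDual) (A B : Finset (Fin n)) (hAB : A ⊆ B)
    (hA : S.auth A) (hB : S.auth B) :
    S.rkPair F B ≤ S.rkPair F A := by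
  have hAc : ¬ S.auth (Finset.univ \ A) := (hsd A).mp hA
  have hBc : ¬ S.auth (Finset.univ \ B) := (hsd B).mp hB
  have r1 := S.rank_MSub_of_unauth (F := F) (Finset.univ \ A) hAc
  have r2 := S.rank_MSub_of_unauth (F := F) (Finset.univ \ B) hBc
  have r3 := S.rank_MSub_le (F := F) A B hAB
  have r4 := S.card_rows_split A B hAB
  unfold MSP.rkPair
  omega
end

section
/- For every subset B ⊆ P with B ∉ Γ (so that the normal-form monotone span program rejects B), there exists a vector v = (v_1,…,v_e) ∈ F_q^e with M_B v = 0 and v_1 ≠ 0; conversely, if such a vector exists then ε₁ = (1,0,…,0) ∉ Im(M_B^t), i.e. ε₁ is not in the row span of M_B. -/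
open MSP

/-- For every `B ⊆ P` with `B ∉ Γ` (so the normal-form
monotone span program rejects `B`) there is a vector `v ∈ F_q^e` with
`M_B v = 0` and `v₁ ≠ 0`; conversely, the existence of such a vector implies
`ε₁ = (1,0,…,0)` is not in the row span of `M_B` (i.e. `ε₁ ∉ Im(M_B^t)`). -/
theorem reject_iff_kernel_vector {F : Type*} [Field F] [Fintype F] {n k : ℕ}
    (S : MSP n k) (B : Finset (Fin n)) :
    (¬ S.auth B → ∃ v : S.Cols → F, (MSub F S B).mulVec v = 0 ∧ v none ≠ 0) ∧
    ((∃ v : S.Cols → F, (MSub F S B).mulVec v = 0 ∧ v none ≠ 0) →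
      eps1 F S ∉ Submodule.span F
        (Set.range fun r : {r : S.Rows // S.label r ∈ B} => M F S r.1)) := by
  constructor
  · intro hB
    have hch : ∀ i : Fin k, ∃ p : {p : Fin n // p ∈ S.A i}, (p : Fin n) ∉ B := by
      intro i
      have hni : ¬ S.A i ⊆ B := fun h => hB ⟨i, h⟩
      rw [Finset.not_subset] at hni
      obtain ⟨p, hp, hpB⟩ := hni
      exact ⟨⟨p, hp⟩, hpB⟩
    choose q hq using hch
    set jf : (i : Fin k) → Fin ((S.A i).card) := fun i => (S.enum i).symm (q i) with hjf
    have hqj : ∀ i, (S.enum i (jf i) : Fin n) ∉ B := by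
      intro i; simpa [hjf] using hq i
    refine ⟨fun c => match c with
      | none => 1
      | some ⟨i, j⟩ => if (j : ℕ) = (jf i : ℕ) then 1 else 0, ?_, ?_⟩
    · funext r
      obtain ⟨⟨i, j2⟩, hr⟩ := r
      have hcard : 0 < (S.A i).card := Finset.card_pos.mpr (S.nonempty i)
      simp only [Matrix.mulVec, dotProduct, MSub, M, Matrix.of_apply,
        Fintype.sum_option, Pi.zero_apply]
      rw [show (Finset.univ : Finset ((i : Fin k) × Fin ((S.A i).card - 1))) = Finset.univ.sigma (fun _ => Finset.univ) from (Finset.univ_sigma_univ).symm, Finset.sum_sigma]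
      by_cases hlast : (j2 : ℕ) = (S.A i).card - 1
      · -- last row of block i; it is labelled by a player in B
        have hjfne : (jf i : ℕ) ≠ (S.A i).card - 1 := by
          intro h
          have : jf i = j2 := Fin.ext (h.trans hlast.symm)
          exact hqj i (this ▸ hr)
        have hjflt : (jf i : ℕ) < (S.A i).card - 1 :=
          lt_of_le_of_ne (Nat.le_sub_one_of_lt ((jf i).isLt.trans_le (le_refl _))) hjfne
        have hsum : ∀ i' : Fin k, ∑ j : Fin ((S.A i').card - 1),
            (if i' = i then (if (j2 : ℕ) = (S.A i).card - 1 then (-1 : F)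
              else if (j : ℕ) = (j2 : ℕ) then 1 else 0) else 0) *
            (if (j : ℕ) = (jf i' : ℕ) then 1 else 0)
            = if i' = i then -1 else 0 := by
          intro i'
          by_cases hii : i' = i
          · subst hii
            simp only [if_pos rfl, if_pos hlast]
            rw [Finset.sum_eq_single (⟨(jf i' : ℕ), hjflt⟩ : Fin ((S.A i').card - 1))]
            · simp
            · intro b _ hb
              have : (b : ℕ) ≠ (jf i' : ℕ) := fun h => hb (Fin.ext h)
              simp [this]
            · intro h; exact absurd (Finset.mem_univ _) h
          · simp [hii]
        calc (if (j2 : ℕ) = (S.A i).card - 1 then (1:F) else 0) * 1 +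
              ∑ i' : Fin k, ∑ j : Fin ((S.A i').card - 1), _ * _
            = 1 + ∑ i' : Fin k, (if i' = i then (-1 : F) else 0) := by
              rw [if_pos hlast, Finset.sum_congr rfl fun i' _ => hsum i']; ring_nf
          _ = 0 := by simp
      · -- identity row j2 of block i; player in B, so j2 ≠ jf i
        have hne : (j2 : ℕ) ≠ (jf i : ℕ) := by
          intro h
          exact hqj i ((Fin.ext h : j2 = jf i) ▸ hr)
        have hsum : ∀ i' : Fin k, ∑ j : Fin ((S.A i').card - 1),
            (if i' = i then (if (j2 : ℕ) = (S.A i).card - 1 then (-1 : F)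
              else if (j : ℕ) = (j2 : ℕ) then 1 else 0) else 0) *
            (if (j : ℕ) = (jf i' : ℕ) then 1 else 0)
            = 0 := by
          intro i'
          by_cases hii : i' = i
          · subst hii
            simp only [if_pos rfl, if_neg hlast]
            apply Finset.sum_eq_zero
            intro j _
            by_cases h1 : (j : ℕ) = (j2 : ℕ)
            · have : (j : ℕ) ≠ (jf i' : ℕ) := h1 ▸ hne
              simp [h1, hne]
            · simp [h1]
          · simp [hii]
        rw [if_neg hlast]
        rw [Finset.sum_congr rfl fun i' _ => hsum i']
        simp
    · simp
  · rintro ⟨v, hv, hv0⟩ hmem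
    have hrow : ∀ w ∈ Submodule.span F
        (Set.range fun r : {r : S.Rows // S.label r ∈ B} => M F S r.1),
        ∑ c, w c * v c = 0 := by
      intro w hw
      induction hw using Submodule.span_induction with
      | mem w hw =>
          obtain ⟨r, rfl⟩ := hw
          have := congrFun hv r
          simpa [Matrix.mulVec, dotProduct, MSub] using this
      | zero => simp
      | add w₁ w₂ _ _ h1 h2 => simp [add_mul, Finset.sum_add_distrib, h1, h2]
      | smul a w _ h =>
          simp only [Pi.smul_apply, smul_eq_mul, mul_assoc, ← Finset.mul_sum, h, mul_zero]
    have h1 := hrow _ hmem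
    rw [Fintype.sum_option] at h1
    simp only [eps1, one_mul, zero_mul, Finset.sum_const_zero, add_zero] at h1
    exact hv0 h1
end
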